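/- Let n, m, p ≥ 1, let A ∈ ℝ^{n×n}, B ∈ ℝ^{n×m}, C ∈ ℝ^{p×n}, D ∈ ℝ^{p×m}, let γ > 0, and let P ∈ ℝ^{n×n} be symmetric positive definite satisfying the bounded-real LMI with gain γ. Then for every input sequence u : ℕ → ℝ^m with ∑_{k=0}^{∞} ‖u_k‖² < ∞, the output sequence z of the DT-LTI system satisfies: the series ∑_{k=0}^{∞} ‖z_k‖² converges and ∑_{k=0}^{∞} ‖z_k‖² ≤ γ² ∑_{k=0}^{∞} ‖u_k‖² (i.e. the system has ℓ₂-gain bound γ). -/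

import Mathlib

open Matrix

/-- Squared Euclidean norm of a vector in `ℝ^d`. -/
def sqNorm {d : ℕ} (v : Fin d → ℝ) : ℝ := ∑ i, v i ^ 2

/-- State trajectory of the DT-LTI system `h_{k+1} = A h_k + B u_k`, `h_0 = 0`. -/
noncomputable def ltiState {n m : ℕ} (A : Matrix (Fin n) (Fin n) ℝ)
    (B : Matrix (Fin n) (Fin m) ℝ) (u : ℕ → Fin m → ℝ) : ℕ → Fin n → ℝ
  | 0 => 0
  | k + 1 => A.mulVec (ltiState A B u k) + B.mulVec (u k)

/-- Output trajectory `z_k = C h_k + D u_k` of the DT-LTI system. -/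
noncomputable def ltiOutput {n m p : ℕ} (A : Matrix (Fin n) (Fin n) ℝ)
    (B : Matrix (Fin n) (Fin m) ℝ) (C : Matrix (Fin p) (Fin n) ℝ)
    (D : Matrix (Fin p) (Fin m) ℝ) (u : ℕ → Fin m → ℝ) (k : ℕ) : Fin p → ℝ :=
  C.mulVec (ltiState A B u k) + D.mulVec (u k)

lemma sqNorm_eq_dot {d : ℕ} (v : Fin d → ℝ) : sqNorm v = v ⬝ᵥ v := by
  simp [sqNorm, dotProduct, sq]

lemma quad_expand {n m p : ℕ}
    (A : Matrix (Fin n) (Fin n) ℝ) (B : Matrix (Fin n) (Fin m) ℝ)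
    (C : Matrix (Fin p) (Fin n) ℝ) (D : Matrix (Fin p) (Fin m) ℝ)
    (γ : ℝ) (P : Matrix (Fin n) (Fin n) ℝ) (h : Fin n → ℝ) (w : Fin m → ℝ) :
    (Sum.elim h w) ⬝ᵥ (Matrix.fromBlocks
        (Aᵀ * P * A - P + Cᵀ * C) (Aᵀ * P * B + Cᵀ * D)
        (Bᵀ * P * A + Dᵀ * C) (Bᵀ * P * B + Dᵀ * D - γ ^ 2 • 1)) *ᵥ (Sum.elim h w)
    = (A *ᵥ h + B *ᵥ w) ⬝ᵥ P *ᵥ (A *ᵥ h + B *ᵥ w) - h ⬝ᵥ P *ᵥ h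
      + (C *ᵥ h + D *ᵥ w) ⬝ᵥ (C *ᵥ h + D *ᵥ w) - γ ^ 2 * (w ⬝ᵥ w) := by
  simp only [fromBlocks_mulVec, sumElim_dotProduct_sumElim, add_mulVec, sub_mulVec,
    smul_mulVec, one_mulVec, ← mulVec_mulVec, dotProduct_add, dotProduct_sub,
    dotProduct_mulVec, vecMul_transpose, dotProduct_smul, smul_eq_mul, mulVec_add, Sum.elim_comp_inl, Sum.elim_comp_inr, add_vecMul, add_dotProduct]
  ring

theorem stmt1 {n m p : ℕ} (hn : 1 ≤ n) (hm : 1 ≤ m) (hp : 1 ≤ p)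
    (A : Matrix (Fin n) (Fin n) ℝ) (B : Matrix (Fin n) (Fin m) ℝ)
    (C : Matrix (Fin p) (Fin n) ℝ) (D : Matrix (Fin p) (Fin m) ℝ)
    (γ : ℝ) (hγ : 0 < γ) (P : Matrix (Fin n) (Fin n) ℝ) (hP : P.PosDef)
    (hLMI : (-(Matrix.fromBlocks
        (Aᵀ * P * A - P + Cᵀ * C) (Aᵀ * P * B + Cᵀ * D)
        (Bᵀ * P * A + Dᵀ * C) (Bᵀ * P * B + Dᵀ * D - γ ^ 2 • 1))).PosDef)
    (u : ℕ → Fin m → ℝ) (hu : Summable fun k => sqNorm (u k)) :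
    (Summable fun k => sqNorm (ltiOutput A B C D u k)) ∧
      ∑' k, sqNorm (ltiOutput A B C D u k) ≤ γ ^ 2 * ∑' k, sqNorm (u k) := by
  set V : ℕ → ℝ := fun k => (ltiState A B u k) ⬝ᵥ P *ᵥ (ltiState A B u k) with hV
  have hVnonneg : ∀ k, 0 ≤ V k := by
    intro k
    have := hP.posSemidef.dotProduct_mulVec_nonneg (ltiState A B u k)
    simpa using this
  have hstep : ∀ k, V (k + 1) + sqNorm (ltiOutput A B C D u k)
      ≤ V k + γ ^ 2 * sqNorm (u k) := by
    intro k
    set h := ltiState A B u k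
    have hq := quad_expand A B C D γ P h (u k)
    have hle : (Sum.elim h (u k)) ⬝ᵥ (Matrix.fromBlocks
        (Aᵀ * P * A - P + Cᵀ * C) (Aᵀ * P * B + Cᵀ * D)
        (Bᵀ * P * A + Dᵀ * C) (Bᵀ * P * B + Dᵀ * D - γ ^ 2 • 1)) *ᵥ (Sum.elim h (u k)) ≤ 0 := by
      have := hLMI.posSemidef.dotProduct_mulVec_nonneg (Sum.elim h (u k))
      simp only [star_trivial, neg_mulVec, dotProduct_neg] at this
      linarith
    rw [hq] at hle
    have e1 : V (k + 1) = (A *ᵥ h + B *ᵥ u k) ⬝ᵥ P *ᵥ (A *ᵥ h + B *ᵥ u k) := rfl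
    have e2 : sqNorm (ltiOutput A B C D u k)
        = (C *ᵥ h + D *ᵥ u k) ⬝ᵥ (C *ᵥ h + D *ᵥ u k) := by
      rw [sqNorm_eq_dot]; rfl
    rw [e2, e1, sqNorm_eq_dot, show V k = h ⬝ᵥ P *ᵥ h from rfl]
    linarith
  have hpartial : ∀ N, ∑ k ∈ Finset.range N, sqNorm (ltiOutput A B C D u k) + V N
      ≤ γ ^ 2 * ∑ k ∈ Finset.range N, sqNorm (u k) := by
    intro N
    induction N with
    | zero =>
      simp [hV, ltiState]
    | succ N ih =>
      rw [Finset.sum_range_succ, Finset.sum_range_succ, mul_add]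
      have := hstep N
      linarith
  have hzn : ∀ k, 0 ≤ sqNorm (ltiOutput A B C D u k) := fun k =>
    Finset.sum_nonneg fun i _ => sq_nonneg _
  have hun : ∀ k, 0 ≤ sqNorm (u k) := fun k =>
    Finset.sum_nonneg fun i _ => sq_nonneg _
  have hbound : ∀ N, ∑ k ∈ Finset.range N, sqNorm (ltiOutput A B C D u k)
      ≤ γ ^ 2 * ∑' k, sqNorm (u k) := by
    intro N
    have h1 := hpartial N
    have h2 : ∑ k ∈ Finset.range N, sqNorm (u k) ≤ ∑' k, sqNorm (u k) :=
      Summable.sum_le_tsum _ (fun i _ => hun i) hu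
    have h3 : γ ^ 2 * ∑ k ∈ Finset.range N, sqNorm (u k)
        ≤ γ ^ 2 * ∑' k, sqNorm (u k) :=
      mul_le_mul_of_nonneg_left h2 (by positivity)
    have := hVnonneg N
    linarith
  exact ⟨summable_of_sum_range_le hzn hbound,
    Real.tsum_le_of_sum_range_le hzn hbound⟩
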